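/- With χ the Kronecker character mod 5 (χ(1)=χ(4)=1, χ(2)=χ(3)=−1), the Dedekind zeta function of ℚ(√5) satisfies ζ_{ℚ(√5)}(2) = 2√5 π⁴/375 and ζ_{ℚ(√5)}(4) = 4√5 π⁸/84375. -/

import Mathlib

open scoped Real

/-- The Kronecker (Legendre) character mod 5: `χ(1)=χ(4)=1`, `χ(2)=χ(3)=-1`, `χ(0)=0`. -/
def chi5 (n : ℕ) : ℤ :=
  if n % 5 = 1 ∨ n % 5 = 4 then 1 else if n % 5 = 2 ∨ n % 5 = 3 then -1 else 0

open scoped Nat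

lemma s5 : Real.sqrt 5 ^ 2 = 5 := Real.sq_sqrt (by norm_num)

lemma c1 : Real.cos (2*π/5) = (Real.sqrt 5 - 1)/4 := by
  have h := Real.cos_two_mul (π/5)
  rw [Real.cos_pi_div_five] at h
  have : 2 * (π/5) = 2*π/5 := by ring
  rw [this] at h
  rw [h]
  nlinarith [s5]

lemma c2 : Real.cos (4*π/5) = -((1 + Real.sqrt 5)/4) := by
  have : (4:ℝ)*π/5 = π - π/5 := by ring
  rw [this, Real.cos_pi_sub, Real.cos_pi_div_five]

lemma c3 : Real.cos (6*π/5) = -((1 + Real.sqrt 5)/4) := by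
  have : (6:ℝ)*π/5 = 2*π - 4*π/5 := by ring
  rw [this, Real.cos_two_pi_sub, c2]

lemma c4 : Real.cos (8*π/5) = (Real.sqrt 5 - 1)/4 := by
  have : (8:ℝ)*π/5 = 2*π - 2*π/5 := by ring
  rw [this, Real.cos_two_pi_sub, c1]

lemma cadd (x : ℝ) (q : ℕ) : Real.cos (x + q*(2*π)) = Real.cos x := Real.cos_add_nat_mul_two_pi x q

lemma key1 (m : ℕ) : (chi5 m : ℝ) * Real.sqrt 5 =
    2 * (Real.cos (2*π*m*(1/5)) - Real.cos (2*π*m*(2/5))) := by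
  obtain ⟨q, r, hr, rfl⟩ : ∃ q r, r < 5 ∧ m = 5*q + r :=
    ⟨m/5, m%5, Nat.mod_lt _ (by norm_num), (Nat.div_add_mod m 5).symm⟩
  have e1 : 2*π*((5*q+r : ℕ) : ℝ)*(1/5) = 2*π*r/5 + q*(2*π) := by push_cast; ring
  have e2 : 2*π*((5*q+r : ℕ) : ℝ)*(2/5) = 4*π*r/5 + q*(2*(2*π)) := by push_cast; ring
  have e3 : 4*π*(r:ℝ)/5 + q*(2*(2*π)) = 4*π*r/5 + ((2*q : ℕ):ℝ)*(2*π) := by push_cast; ring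
  rw [e1, e2, e3, cadd, cadd]
  have hm : (5*q+r) % 5 = r := by omega
  simp only [chi5, hm]
  interval_cases r <;> push_cast
  · norm_num
  · rw [show 2*π*(1:ℝ)/5 = 2*π/5 by ring, show 4*π*(1:ℝ)/5 = 4*π/5 by ring, c1, c2]
    norm_num; nlinarith [s5]
  · rw [show 2*π*(2:ℝ)/5 = 4*π/5 by ring, show 4*π*(2:ℝ)/5 = 8*π/5 by ring, c2, c4]
    norm_num; nlinarith [s5]
  · rw [show 2*π*(3:ℝ)/5 = 6*π/5 by ring,
      show 4*π*(3:ℝ)/5 = 2*π/5 + 2*π by ring, Real.cos_add_two_pi, c3, c1]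
    norm_num; nlinarith [s5]
  · rw [show 2*π*(4:ℝ)/5 = 8*π/5 by ring,
      show 4*π*(4:ℝ)/5 = 6*π/5 + 2*π by ring, Real.cos_add_two_pi, c4, c3]
    norm_num; nlinarith [s5]


lemma b2eval (x : ℝ) : (Polynomial.map (algebraMap ℚ ℝ) (Polynomial.bernoulli 2)).eval x = x^2 - x + 1/6 := by
  simp [Polynomial.bernoulli, Finset.sum_range_succ, Polynomial.eval_map]
  norm_num [bernoulli]
  ring

lemma b4eval (x : ℝ) : (Polynomial.map (algebraMap ℚ ℝ) (Polynomial.bernoulli 4)).eval x = x^4 - 2*x^3 + x^2 - 1/30 := by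
  simp [Polynomial.bernoulli, Finset.sum_range_succ, Polynomial.eval_map]
  norm_num [bernoulli]
  rw [show Nat.choose 4 2 = 6 from rfl]
  push_cast
  ring

lemma shift {f : ℕ → ℝ} {S : ℝ} (h : HasSum f S) (h0 : f 0 = 0) :
    HasSum (fun n => f (n + 1)) S := by
  rw [hasSum_nat_add_iff 1]
  simpa [h0] using h

lemma s5pos : (0:ℝ) < Real.sqrt 5 := Real.sqrt_pos.mpr (by norm_num)

lemma Lsum (k : ℕ) (hk : k ≠ 0) :
    HasSum (fun n : ℕ => (chi5 n : ℝ) / (n:ℝ)^(2*k))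
      (2 * ((-1 : ℝ)^(k+1) * (2*π)^(2*k)/2/(2*k)! *
        ((Polynomial.map (algebraMap ℚ ℝ) (Polynomial.bernoulli (2*k))).eval (1/5 : ℝ)
          - (Polynomial.map (algebraMap ℚ ℝ) (Polynomial.bernoulli (2*k))).eval (2/5 : ℝ))) / Real.sqrt 5) := by
  have h1 := hasSum_one_div_nat_pow_mul_cos hk (x := 1/5) ⟨by norm_num, by norm_num⟩
  have h2 := hasSum_one_div_nat_pow_mul_cos hk (x := 2/5) ⟨by norm_num, by norm_num⟩
  have h3 := (h1.sub h2).mul_left 2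
  have h4 : ∀ n : ℕ, 2 * (1/(n:ℝ)^(2*k) * Real.cos (2*π*n*(1/5)) - 1/(n:ℝ)^(2*k) * Real.cos (2*π*n*(2/5)))
      = (chi5 n : ℝ) / (n:ℝ)^(2*k) * Real.sqrt 5 := by
    intro n
    rw [show (chi5 n : ℝ)/(n:ℝ)^(2*k)*Real.sqrt 5 = ((chi5 n : ℝ)*Real.sqrt 5) * (1/(n:ℝ)^(2*k)) from by ring, key1 n]
    ring
  have h5 : HasSum (fun n : ℕ => (chi5 n : ℝ) / (n:ℝ)^(2*k) * Real.sqrt 5)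
      (2 * (((-1:ℝ)^(k+1) * (2*π)^(2*k)/2/(2*k)! * (Polynomial.map (algebraMap ℚ ℝ) (Polynomial.bernoulli (2*k))).eval (1/5:ℝ))
        - ((-1:ℝ)^(k+1) * (2*π)^(2*k)/2/(2*k)! * (Polynomial.map (algebraMap ℚ ℝ) (Polynomial.bernoulli (2*k))).eval (2/5:ℝ)))) := by
    simpa only [← h4] using h3
  have h6 := h5.div_const (Real.sqrt 5)
  have hne : Real.sqrt 5 ≠ 0 := ne_of_gt s5pos
  simp only [mul_div_assoc, div_self hne, mul_one] at h6
  convert h6 using 1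
  · rfl
  · ring

lemma Lsum2 : HasSum (fun n : ℕ => (chi5 (n+1) : ℝ) / ((n:ℝ)+1)^2)
    (4 * Real.sqrt 5 * π^2 / 125) := by
  have h := shift (Lsum 1 one_ne_zero) (by norm_num [chi5])
  have he : (2:ℝ) * ((-1:ℝ)^(1+1) * (2*π)^(2*1)/2/(2*1)! *
      ((Polynomial.map (algebraMap ℚ ℝ) (Polynomial.bernoulli (2*1))).eval (1/5 : ℝ)
        - (Polynomial.map (algebraMap ℚ ℝ) (Polynomial.bernoulli (2*1))).eval (2/5 : ℝ))) / Real.sqrt 5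
      = 4 * Real.sqrt 5 * π^2 / 125 := by
    rw [b2eval, b2eval, div_eq_iff (ne_of_gt s5pos)]
    norm_num [Nat.factorial]
    linear_combination (-4*π^2/125) * s5
  rw [he] at h
  convert h using 2 with n
  push_cast
  norm_num

lemma Lsum4 : HasSum (fun n : ℕ => (chi5 (n+1) : ℝ) / ((n:ℝ)+1)^4)
    (8 * Real.sqrt 5 * π^4 / 1875) := by
  have h := shift (Lsum 2 two_ne_zero) (by norm_num [chi5])
  have he : (2:ℝ) * ((-1:ℝ)^(2+1) * (2*π)^(2*2)/2/(2*2)! *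
      ((Polynomial.map (algebraMap ℚ ℝ) (Polynomial.bernoulli (2*2))).eval (1/5 : ℝ)
        - (Polynomial.map (algebraMap ℚ ℝ) (Polynomial.bernoulli (2*2))).eval (2/5 : ℝ))) / Real.sqrt 5
      = 8 * Real.sqrt 5 * π^4 / 1875 := by
    rw [b4eval, b4eval, div_eq_iff (ne_of_gt s5pos)]
    norm_num [Nat.factorial]
    linear_combination (-8*π^4/1875) * s5
  rw [he] at h
  convert h using 2 with n
  push_cast
  norm_num

lemma zeta2' : HasSum (fun n : ℕ => 1 / ((n:ℝ)+1)^2) (π^2/6) := by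
  have h := shift hasSum_zeta_two (by norm_num)
  convert h using 2 with n
  push_cast
  norm_num

lemma zeta4' : HasSum (fun n : ℕ => 1 / ((n:ℝ)+1)^4) (π^4/90) := by
  have h := shift hasSum_zeta_four (by norm_num)
  convert h using 2 with n
  push_cast
  norm_num

theorem stmt17 :
    (∑' n : ℕ, 1 / ((n : ℝ) + 1) ^ 2) * (∑' n : ℕ, (chi5 (n + 1) : ℝ) / ((n : ℝ) + 1) ^ 2)
        = 2 * Real.sqrt 5 * π ^ 4 / 375 ∧
    (∑' n : ℕ, 1 / ((n : ℝ) + 1) ^ 4) * (∑' n : ℕ, (chi5 (n + 1) : ℝ) / ((n : ℝ) + 1) ^ 4)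
        = 4 * Real.sqrt 5 * π ^ 8 / 84375 := by
  rw [zeta2'.tsum_eq, Lsum2.tsum_eq, zeta4'.tsum_eq, Lsum4.tsum_eq]
  constructor <;> ring
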